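/- Let m ≥ 5 be an integer, let u : ℝ^m ∖ {0} → ℝ^{m²} be the Misawa–Nakauchi map, let α ∈ (0, π/2) satisfy sin²α = 1 − 2/m, and define ũ(x) = (sin α · u(x), cos α). Then the bienergy of ũ over the unit ball satisfies E₂(ũ) = (1/2)∫_{B^m} (|Δũ|² − |∇ũ|⁴) dx = (4(m−2)/(m−4)) · vol(𝕊^{m−1}). -/

import Mathlib

noncomputable section

open Real MeasureTheory

/-- Partial derivative of `f` in the `k`-th coordinate direction. -/
def pd {m : ℕ} (k : Fin m) (f : EuclideanSpace ℝ (Fin m) → ℝ)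
    (x : EuclideanSpace ℝ (Fin m)) : ℝ :=
  fderiv ℝ f x (EuclideanSpace.single k 1)

/-- Euclidean Laplacian `Δf = Σ_k ∂²f/∂x_k²`. -/
def lap {m : ℕ} (f : EuclideanSpace ℝ (Fin m) → ℝ)
    (x : EuclideanSpace ℝ (Fin m)) : ℝ :=
  ∑ k : Fin m, pd k (pd k f) x

/-- Squared norm of the total derivative: `|∇w|² = Σ_{k,a} (∂_k w_a)²`. -/
def gradSq {m : ℕ} {ι : Type*} [Fintype ι]
    (w : ι → EuclideanSpace ℝ (Fin m) → ℝ) (x : EuclideanSpace ℝ (Fin m)) : ℝ :=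
  ∑ k : Fin m, ∑ a : ι, (pd k (w a) x) ^ 2

/-- The Misawa–Nakauchi map `u_{ij}(x) = (1/√(m(m−1)))(−δ_{ij} + m xᵢxⱼ/r²)`. -/
def uMN (m : ℕ) (i j : Fin m) (x : EuclideanSpace ℝ (Fin m)) : ℝ :=
  (1 / Real.sqrt ((m : ℝ) * ((m : ℝ) - 1))) *
    (-(if i = j then (1 : ℝ) else 0) + (m : ℝ) * x i * x j / ‖x‖ ^ 2)

/-- The rotated map `ũ_α = (sin α · u, cos α)`, with values in `ℝ^{m²+1} = ℝ^{m²} × ℝ`. -/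
def uTilde (m : ℕ) (α : ℝ) :
    (Fin m × Fin m) ⊕ Unit → EuclideanSpace ℝ (Fin m) → ℝ
  | Sum.inl p => fun x => Real.sin α * uMN m p.1 p.2 x
  | Sum.inr _ => fun _ => Real.cos α

/-- The open unit ball in `ℝ^m`. -/
def unitBall (m : ℕ) : Set (EuclideanSpace ℝ (Fin m)) := Metric.ball 0 1

/-- The surface measure of the unit sphere `𝕊^{m−1} ⊂ ℝ^m`. -/
def sphereVol (m : ℕ) : ℝ :=
  ((volume : Measure (EuclideanSpace ℝ (Fin m))).toSphere Set.univ).toReal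

section Aux




variable {m : ℕ}
abbrev E (m : ℕ) := EuclideanSpace ℝ (Fin m)
def Q (x : E m) : ℝ := ∑ l, x l ^ 2
def dl {m : ℕ} (i j : Fin m) : ℝ := if i = j then 1 else 0
def cc (m : ℕ) : ℝ := 1 / Real.sqrt ((m : ℝ) * ((m : ℝ) - 1))

def g1 (m : ℕ) (i j k : Fin m) (x : E m) : ℝ :=
  cc m * ((m : ℝ) * ((dl i k * x j + dl j k * x i) * (Q x)⁻¹
      - 2 * (x i * x j * x k) * (Q x * Q x)⁻¹))

lemma pd_eq {f : E m → ℝ} {L : E m →L[ℝ] ℝ} {x : E m} (h : HasFDerivAt f L x) (k : Fin m) :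
    pd k f x = L (EuclideanSpace.single k 1) := by rw [pd, h.fderiv]

lemma hproj (i : Fin m) (x : E m) : HasFDerivAt (fun y : E m => y i) (EuclideanSpace.proj i : E m →L[ℝ] ℝ) x :=
  (EuclideanSpace.proj i : E m →L[ℝ] ℝ).hasFDerivAt

lemma Q_eq : Q (m := m) = fun y => ∑ l, y l * y l := by funext y; simp [Q, sq]

lemma normSq_eq (x : E m) : ‖x‖ ^ 2 = Q x := by
  rw [EuclideanSpace.norm_eq, Real.sq_sqrt (by positivity)]
  simp [Q, sq_abs]

lemma uMN_eq (i j : Fin m) : uMN m i j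
    = fun y => cc m * (-(dl i j) + ((m : ℝ) * y i * y j) * (Q y)⁻¹) := by
  funext y
  rw [uMN, ← normSq_eq, div_eq_mul_inv]
  rfl

lemma hQ (x : E m) :
    HasFDerivAt (Q (m := m)) (∑ l, (x l • (EuclideanSpace.proj l : E m →L[ℝ] ℝ)
      + x l • (EuclideanSpace.proj l : E m →L[ℝ] ℝ))) x := by
  rw [Q_eq]
  exact HasFDerivAt.fun_sum (fun l _ => (hproj l x).fun_mul (hproj l x))

lemma pd_uMN {x : E m} (hx : Q x ≠ 0) (i j k : Fin m) :
    pd k (uMN m i j) x = g1 m i j k x := by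
  have hinv : HasFDerivAt (fun y : E m => (Q y)⁻¹)
      ((ContinuousLinearMap.smulRight (1 : ℝ →L[ℝ] ℝ) (-(Q x ^ 2)⁻¹)).comp
        (∑ l, (x l • (EuclideanSpace.proj l : E m →L[ℝ] ℝ)
          + x l • (EuclideanSpace.proj l : E m →L[ℝ] ℝ)))) x :=
    (hasFDerivAt_inv hx).comp x (hQ x)
  have h := ((((hproj i x).const_mul (m : ℝ)).fun_mul (hproj j x)).fun_mul hinv).const_add
      (-(dl i j)) |>.const_mul (cc m)
  rw [uMN_eq, pd_eq h]
  simp only [ContinuousLinearMap.add_apply, ContinuousLinearMap.smul_apply,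
    ContinuousLinearMap.comp_apply, ContinuousLinearMap.coe_sum', Finset.sum_apply,
    ContinuousLinearMap.smulRight_apply, ContinuousLinearMap.one_apply,
    PiLp.proj_apply, EuclideanSpace.single_apply, smul_eq_mul,
    ContinuousLinearMap.zero_apply]
  rw [g1]
  have hs : ∀ (a : Fin m), (∑ l, (x l * (if l = a then (1:ℝ) else 0) + x l * (if l = a then 1 else 0))) = 2 * x a := by
    intro a; simp [Finset.sum_add_distrib, Finset.sum_ite_eq', two_mul]
  rw [hs k]
  have hdl : ∀ (a b : Fin m) (c : ℝ), (if a = b then c else 0) = c * dl a b := by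
    intro a b c; unfold dl; split <;> simp
  simp only [hdl]
  field_simp
  ring

lemma g1_eq (i j k : Fin m) : g1 m i j k = fun y =>
    cc m * ((m : ℝ) * ((dl i k * y j + dl j k * y i) * (Q y)⁻¹
      - 2 * (y i * y j * y k) * (Q y * Q y)⁻¹)) := rfl

lemma Qcont : Continuous (Q (m := m)) := by
  rw [Q_eq]
  exact continuous_finset_sum _ fun l _ => ((EuclideanSpace.proj (𝕜:=ℝ) l).continuous.mul (EuclideanSpace.proj l).continuous)

lemma pd_g1 {x : E m} (hx : Q x ≠ 0) (i j k : Fin m) :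
    pd k (g1 m i j k) x = cc m * ((m:ℝ) * ( 2*dl i k*dl j k*(Q x)⁻¹
      - 2*(x k*(dl i k*x j + dl j k*x i))*(Q x*Q x)⁻¹
      - 2*(x i*x j + x k*(dl i k*x j + dl j k * x i))*(Q x*Q x)⁻¹
      + 8*(x i*x j*(x k*x k))*(Q x*Q x*Q x)⁻¹ )) := by
  have hinv : HasFDerivAt (fun y : E m => (Q y)⁻¹)
      ((ContinuousLinearMap.smulRight (1 : ℝ →L[ℝ] ℝ) (-(Q x ^ 2)⁻¹)).comp
        (∑ l, (x l • (EuclideanSpace.proj l : E m →L[ℝ] ℝ)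
          + x l • (EuclideanSpace.proj l : E m →L[ℝ] ℝ)))) x :=
    (hasFDerivAt_inv hx).comp x (hQ x)
  have hinv2 : HasFDerivAt (fun y : E m => (Q y * Q y)⁻¹)
      ((ContinuousLinearMap.smulRight (1 : ℝ →L[ℝ] ℝ) (-((Q x * Q x) ^ 2)⁻¹)).comp
        (Q x • (∑ l, (x l • (EuclideanSpace.proj l : E m →L[ℝ] ℝ)
          + x l • (EuclideanSpace.proj l : E m →L[ℝ] ℝ)))
         + Q x • (∑ l, (x l • (EuclideanSpace.proj l : E m →L[ℝ] ℝ)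
          + x l • (EuclideanSpace.proj l : E m →L[ℝ] ℝ))))) x :=
    (hasFDerivAt_inv (mul_ne_zero hx hx)).comp x ((hQ x).mul (hQ x))
  have hA : HasFDerivAt (fun y : E m => dl i k * y j + dl j k * y i)
      (dl i k • (EuclideanSpace.proj j : E m →L[ℝ] ℝ) + dl j k • (EuclideanSpace.proj i : E m →L[ℝ] ℝ)) x :=
    ((hproj j x).const_mul (dl i k)).add ((hproj i x).const_mul (dl j k))
  have h := ((hA.fun_mul hinv).fun_sub
      ((((hproj i x).fun_mul (hproj j x)).fun_mul (hproj k x)).const_mul 2 |>.fun_mul hinv2)).const_mul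
      ((m : ℝ)) |>.const_mul (cc m)
  rw [g1_eq, pd_eq h]
  simp only [ContinuousLinearMap.add_apply, ContinuousLinearMap.smul_apply,
    ContinuousLinearMap.comp_apply, ContinuousLinearMap.coe_sum', Finset.sum_apply,
    ContinuousLinearMap.smulRight_apply, ContinuousLinearMap.one_apply,
    PiLp.proj_apply, EuclideanSpace.single_apply, smul_eq_mul,
    ContinuousLinearMap.sub_apply, ContinuousLinearMap.zero_apply]
  have hs : ∀ (a : Fin m), (∑ l, (x l * (if l = a then (1:ℝ) else 0) + x l * (if l = a then 1 else 0))) = 2 * x a := by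
    intro a; simp [Finset.sum_add_distrib, Finset.sum_ite_eq', two_mul]
  rw [hs k]
  have hdl : ∀ (a b : Fin m) (c : ℝ), (if a = b then c else 0) = c * dl a b := by
    intro a b c; unfold dl; split <;> simp
  simp only [hdl]
  have hdkk : dl k k = 1 := by simp [dl]
  simp only [if_true]
  field_simp
  ring


lemma sum_dx (i : Fin m) (f : Fin m → ℝ) : ∑ k, dl i k * f k = f i := by
  simp [dl, Finset.sum_ite_eq]

lemma sum_sq (x : E m) : ∑ k, x k * x k = Q x := by
  rw [Q_eq]

lemma lap_uMN {x : E m} (hx : Q x ≠ 0) (i j : Fin m) :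
    lap (uMN m i j) x
      = cc m * (2*(m:ℝ)*dl i j*(Q x)⁻¹ - 2*(m:ℝ)^2*(x i * x j)*(Q x*Q x)⁻¹) := by
  have hev : ∀ k : Fin m, pd k (uMN m i j) =ᶠ[nhds x] g1 m i j k := by
    intro k
    exact (Qcont.continuousAt.eventually_ne hx).mono fun y hy => pd_uMN hy i j k
  have step1 : ∀ k : Fin m, pd k (pd k (uMN m i j)) x = pd k (g1 m i j k) x := by
    intro k
    have : fderiv ℝ (pd k (uMN m i j)) x = fderiv ℝ (g1 m i j k) x := (hev k).fderiv_eq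
    simp only [pd, this]
  have expand : ∀ k ∈ (Finset.univ : Finset (Fin m)),
      pd k (pd k (uMN m i j)) x
        = (2*cc m*(m:ℝ)*(Q x)⁻¹) * (dl i k * dl j k)
          + ((-4*cc m*(m:ℝ)*(x j)*(Q x*Q x)⁻¹) * (dl i k * x k)
          + ((-4*cc m*(m:ℝ)*(x i)*(Q x*Q x)⁻¹) * (dl j k * x k)
          + ((8*cc m*(m:ℝ)*(x i*x j)*(Q x*Q x*Q x)⁻¹) * (x k * x k)
          + (-2)*cc m*(m:ℝ)*(x i*x j)*(Q x*Q x)⁻¹))) := by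
    intro k _
    rw [step1 k, pd_g1 hx i j k]
    field_simp
    ring
  rw [lap, Finset.sum_congr rfl expand]
  simp only [Finset.sum_add_distrib, ← Finset.mul_sum, sum_dx, sum_sq,
    Finset.sum_const, Finset.card_univ, Fintype.card_fin, nsmul_eq_mul]
  have hsym : dl j i = dl i j := by simp [dl, eq_comm]
  rw [hsym]
  field_simp
  ring

lemma sum_xd (i : Fin m) (f : Fin m → ℝ) : ∑ k, dl k i * f k = f i := by
  simp [dl, Finset.sum_ite_eq']

lemma dl_self (i : Fin m) : dl i i = 1 := by simp [dl]

lemma diff_uMN {x : E m} (hx : Q x ≠ 0) (i j : Fin m) :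
    DifferentiableAt ℝ (uMN m i j) x := by
  rw [uMN_eq]
  have hQd : DifferentiableAt ℝ (Q (m := m)) x := (hQ x).differentiableAt
  have hi : DifferentiableAt ℝ (fun y : E m => y i) x := (hproj i x).differentiableAt
  have hj : DifferentiableAt ℝ (fun y : E m => y j) x := (hproj j x).differentiableAt
  exact (((hi.const_mul _).mul hj).mul (hQd.inv hx)).const_add _ |>.const_mul _

lemma diff_g1 {x : E m} (hx : Q x ≠ 0) (i j k : Fin m) :
    DifferentiableAt ℝ (g1 m i j k) x := by
  rw [g1_eq]
  have hQd : DifferentiableAt ℝ (Q (m := m)) x := (hQ x).differentiableAt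
  have hi : DifferentiableAt ℝ (fun y : E m => y i) x := (hproj i x).differentiableAt
  have hj : DifferentiableAt ℝ (fun y : E m => y j) x := (hproj j x).differentiableAt
  have hk : DifferentiableAt ℝ (fun y : E m => y k) x := (hproj k x).differentiableAt
  exact ((((hj.const_mul _).add (hi.const_mul _)).mul (hQd.inv hx)).sub
    (((hi.mul hj).mul hk).const_mul 2 |>.mul ((hQd.mul hQd).inv (mul_ne_zero hx hx)))).const_mul
    _ |>.const_mul _

lemma pd_const_mul {f : E m → ℝ} {x : E m} (h : DifferentiableAt ℝ f x) (s : ℝ) (k : Fin m) :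
    pd k (fun y => s * f y) x = s * pd k f x := by
  unfold pd; rw [fderiv_const_mul h]; simp

lemma pd_uMN_smul {x : E m} (hx : Q x ≠ 0) (s : ℝ) (i j k : Fin m) :
    pd k (fun y => s * uMN m i j y) x = s * g1 m i j k x := by
  rw [pd_const_mul (diff_uMN hx i j) s k, pd_uMN hx i j k]

lemma lap_uMN_smul {x : E m} (hx : Q x ≠ 0) (s : ℝ) (i j : Fin m) :
    lap (fun y => s * uMN m i j y) x = s * lap (uMN m i j) x := by
  have hev : ∀ k : Fin m, pd k (fun y => s * uMN m i j y) =ᶠ[nhds x]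
      (fun y => s * g1 m i j k y) := fun k =>
    (Qcont.continuousAt.eventually_ne hx).mono fun y hy => pd_uMN_smul hy s i j k
  have hev2 : ∀ k : Fin m, pd k (uMN m i j) =ᶠ[nhds x] g1 m i j k := fun k =>
    (Qcont.continuousAt.eventually_ne hx).mono fun y hy => pd_uMN hy i j k
  unfold lap
  rw [Finset.mul_sum]
  refine Finset.sum_congr rfl fun k _ => ?_
  have h1 : fderiv ℝ (pd k (fun y => s * uMN m i j y)) x
      = fderiv ℝ (fun y => s * g1 m i j k y) x := (hev k).fderiv_eq
  have h2 : fderiv ℝ (pd k (uMN m i j)) x = fderiv ℝ (g1 m i j k) x := (hev2 k).fderiv_eq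
  show pd k _ x = s * pd k _ x
  simp only [pd, h1, h2]
  exact pd_const_mul (diff_g1 hx i j k) s k

lemma cc_sq (hm : 2 ≤ m) : cc m ^ 2 = ((m : ℝ) * ((m : ℝ) - 1))⁻¹ := by
  have h : (0 : ℝ) < (m : ℝ) * ((m : ℝ) - 1) := by
    have : (2 : ℝ) ≤ (m : ℝ) := by exact_mod_cast hm
    nlinarith
  rw [cc, div_pow, one_pow, Real.sq_sqrt h.le, one_div]

lemma sum_lap_sq (hm : 2 ≤ m) {x : E m} (hx : Q x ≠ 0) :
    ∑ i : Fin m, ∑ j : Fin m, (lap (uMN m i j) x) ^ 2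
      = 4 * (m : ℝ)^2 * (Q x * Q x)⁻¹ := by
  have e1 : ∀ i : Fin m, ∀ j ∈ (Finset.univ : Finset (Fin m)),
      (lap (uMN m i j) x) ^ 2
        = (cc m ^ 2 * 4 * (m:ℝ)^2 * (Q x * Q x)⁻¹) * (dl i j * dl i j)
          + ((- (cc m ^ 2 * 8 * (m:ℝ)^3 * (Q x * (Q x * Q x))⁻¹)) * (dl i j * (x i * x j))
          + (cc m ^ 2 * 4 * (m:ℝ)^4 * ((Q x * Q x) * (Q x * Q x))⁻¹) * ((x i * x i) * (x j * x j))) := by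
    intro i j _
    rw [lap_uMN hx i j]
    field_simp
    ring
  rw [Finset.sum_congr rfl (fun i _ => Finset.sum_congr rfl (e1 i))]
  have e2 : ∀ i ∈ (Finset.univ : Finset (Fin m)),
      (∑ j, ((cc m ^ 2 * 4 * (m:ℝ)^2 * (Q x * Q x)⁻¹) * (dl i j * dl i j)
          + ((- (cc m ^ 2 * 8 * (m:ℝ)^3 * (Q x * (Q x * Q x))⁻¹)) * (dl i j * (x i * x j))
          + (cc m ^ 2 * 4 * (m:ℝ)^4 * ((Q x * Q x) * (Q x * Q x))⁻¹) * ((x i * x i) * (x j * x j)))))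
        = (cc m ^ 2 * 4 * (m:ℝ)^2 * (Q x * Q x)⁻¹)
          + ((- (cc m ^ 2 * 8 * (m:ℝ)^3 * (Q x * (Q x * Q x))⁻¹)) * (x i * x i)
          + (cc m ^ 2 * 4 * (m:ℝ)^4 * ((Q x * Q x) * (Q x * Q x))⁻¹ * Q x) * (x i * x i)) := by
    intro i _
    simp only [Finset.sum_add_distrib, ← Finset.mul_sum, sum_dx, dl_self, mul_one, sum_sq]
    ring
  rw [Finset.sum_congr rfl e2]
  simp only [Finset.sum_add_distrib, ← Finset.mul_sum, sum_sq,
    Finset.sum_const, Finset.card_univ, Fintype.card_fin, nsmul_eq_mul]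
  rw [cc_sq hm]
  have h2 : (2 : ℝ) ≤ (m : ℝ) := by exact_mod_cast hm
  have hm0 : (m : ℝ) ≠ 0 := by linarith
  have hm1 : (m : ℝ) - 1 ≠ 0 := by linarith
  field_simp
  ring

lemma sum_g1_sq (hm : 2 ≤ m) {x : E m} (hx : Q x ≠ 0) :
    ∑ k : Fin m, ∑ i : Fin m, ∑ j : Fin m, (g1 m i j k x) ^ 2
      = 2 * (m : ℝ) * (Q x)⁻¹ := by
  set c1 : ℝ := cc m ^ 2 * (m:ℝ)^2 * (Q x * Q x)⁻¹ with hc1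
  set c2 : ℝ := 2 * (cc m ^ 2 * (m:ℝ)^2 * (Q x * Q x)⁻¹) with hc2
  set c4 : ℝ := -4 * (cc m ^ 2 * (m:ℝ)^2 * (Q x * (Q x * Q x))⁻¹) with hc4
  set c6 : ℝ := 4 * (cc m ^ 2 * (m:ℝ)^2 * ((Q x * Q x) * (Q x * Q x))⁻¹) with hc6
  have e1 : ∀ k i : Fin m, ∀ j ∈ (Finset.univ : Finset (Fin m)),
      (g1 m i j k x) ^ 2
        = (c1*(dl i k*dl i k)) * (x j * x j)
          + ((c2*(dl i k * x i)) * (dl j k * x j)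
          + ((c1*(x i*x i)) * (dl j k * dl j k)
          + ((c4*(dl i k*(x i*x k))) * (x j*x j)
          + ((c4*((x i*x i)*x k)) * (dl j k * x j)
          + (c6*((x i*x i)*(x k*x k))) * (x j*x j))))) := by
    intro k i j _
    rw [g1, hc1, hc2, hc4, hc6]
    field_simp
    ring
  rw [Finset.sum_congr rfl (fun k _ => Finset.sum_congr rfl
    (fun i _ => Finset.sum_congr rfl (e1 k i)))]
  have e2 : ∀ k : Fin m, ∀ i ∈ (Finset.univ : Finset (Fin m)),
      (∑ j : Fin m, ((c1*(dl i k*dl i k)) * (x j * x j)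
          + ((c2*(dl i k * x i)) * (dl j k * x j)
          + ((c1*(x i*x i)) * (dl j k * dl j k)
          + ((c4*(dl i k*(x i*x k))) * (x j*x j)
          + ((c4*((x i*x i)*x k)) * (dl j k * x j)
          + (c6*((x i*x i)*(x k*x k))) * (x j*x j)))))))
        = (c1*Q x)*(dl i k*dl i k)
          + ((c2*x k)*(dl i k * x i)
          + (c1*(x i*x i)
          + ((c4*(Q x * x k))*(dl i k * x i)
          + ((c4*(x k*x k))*(x i*x i)
          + (c6*(Q x *(x k*x k)))*(x i*x i))))) := by
    intro k i _
    simp only [Finset.sum_add_distrib, ← Finset.mul_sum, sum_xd, sum_sq, dl_self, mul_one]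
    ring
  rw [Finset.sum_congr rfl (fun k _ => Finset.sum_congr rfl (e2 k))]
  have e3 : ∀ k ∈ (Finset.univ : Finset (Fin m)),
      (∑ i : Fin m, ((c1*Q x)*(dl i k*dl i k)
          + ((c2*x k)*(dl i k * x i)
          + (c1*(x i*x i)
          + ((c4*(Q x * x k))*(dl i k * x i)
          + ((c4*(x k*x k))*(x i*x i)
          + (c6*(Q x *(x k*x k)))*(x i*x i)))))))
        = (c1*Q x)
          + (c2*(x k*x k)
          + (c1*Q x
          + ((c4*Q x)*(x k*x k)
          + ((c4*Q x)*(x k*x k)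
          + (c6*(Q x*Q x))*(x k*x k))))) := by
    intro k _
    simp only [Finset.sum_add_distrib, ← Finset.mul_sum, sum_xd, sum_sq, dl_self, mul_one]
    ring
  rw [Finset.sum_congr rfl e3]
  simp only [Finset.sum_add_distrib, ← Finset.mul_sum, sum_sq,
    Finset.sum_const, Finset.card_univ, Fintype.card_fin, nsmul_eq_mul]
  rw [hc1, hc2, hc4, hc6, cc_sq hm]
  have h2 : (2 : ℝ) ≤ (m : ℝ) := by exact_mod_cast hm
  have hm0 : (m : ℝ) ≠ 0 := by linarith
  have hm1 : (m : ℝ) - 1 ≠ 0 := by linarith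
  field_simp
  ring



lemma pd_const (c : ℝ) (k : Fin m) : pd k (fun _ : E m => c) = fun _ => (0 : ℝ) := by
  funext y; simp [pd]

lemma lap_const (c : ℝ) (x : E m) : lap (fun _ : E m => c) x = 0 := by
  unfold lap
  rw [Finset.sum_congr rfl (fun k _ => by rw [pd_const c k, pd_const 0 k])]
  simp

lemma Qx_ne {x : E m} (hx : x ≠ 0) : Q x ≠ 0 := by
  rw [← normSq_eq]
  exact pow_ne_zero 2 (norm_ne_zero_iff.mpr hx)

lemma integrand_eq (hm : 5 ≤ m) (α : ℝ) (hsin : Real.sin α ^ 2 = 1 - 2 / (m : ℝ))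
    {x : E m} (hx : x ≠ 0) :
    (∑ a : (Fin m × Fin m) ⊕ Unit, (lap (uTilde m α a) x) ^ 2)
      - (gradSq (uTilde m α) x) ^ 2
    = 8 * ((m : ℝ) - 2) * (Q x * Q x)⁻¹ := by
  have hm2 : 2 ≤ m := le_trans (by norm_num) hm
  have hQx : Q x ≠ 0 := Qx_ne hx
  have h1 : (∑ a : (Fin m × Fin m) ⊕ Unit, (lap (uTilde m α a) x) ^ 2)
      = Real.sin α ^ 2 * (4 * (m : ℝ)^2 * (Q x * Q x)⁻¹) := by
    rw [Fintype.sum_sum_type]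
    have hr : ∑ a : Unit, (lap (uTilde m α (Sum.inr a)) x) ^ 2 = 0 := by
      simp [uTilde, lap_const]
    rw [hr, add_zero, Fintype.sum_prod_type]
    have hl : ∀ i : Fin m, ∀ j ∈ (Finset.univ : Finset (Fin m)),
        (lap (uTilde m α (Sum.inl (i, j))) x) ^ 2
          = Real.sin α ^ 2 * (lap (uMN m i j) x) ^ 2 := by
      intro i j _
      rw [show uTilde m α (Sum.inl (i, j)) = fun y => Real.sin α * uMN m i j y from rfl,
        lap_uMN_smul hQx, mul_pow]
    rw [Finset.sum_congr rfl (fun i _ => Finset.sum_congr rfl (hl i))]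
    simp only [← Finset.mul_sum]
    rw [sum_lap_sq hm2 hQx]
  have h2 : gradSq (uTilde m α) x = Real.sin α ^ 2 * (2 * (m : ℝ) * (Q x)⁻¹) := by
    unfold gradSq
    have hk : ∀ k ∈ (Finset.univ : Finset (Fin m)),
        (∑ a : (Fin m × Fin m) ⊕ Unit, (pd k (uTilde m α a) x) ^ 2)
          = Real.sin α ^ 2 * (∑ i, ∑ j, (g1 m i j k x) ^ 2) := by
      intro k _
      rw [Fintype.sum_sum_type]
      have hr : ∑ a : Unit, (pd k (uTilde m α (Sum.inr a)) x) ^ 2 = 0 := by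
        simp [uTilde, pd_const]
      rw [hr, add_zero, Fintype.sum_prod_type]
      have hl : ∀ i : Fin m, ∀ j ∈ (Finset.univ : Finset (Fin m)),
          (pd k (uTilde m α (Sum.inl (i, j))) x) ^ 2
            = Real.sin α ^ 2 * (g1 m i j k x) ^ 2 := by
        intro i j _
        rw [show uTilde m α (Sum.inl (i, j)) = fun y => Real.sin α * uMN m i j y from rfl,
          pd_uMN_smul hQx, mul_pow]
      rw [Finset.sum_congr rfl (fun i _ => Finset.sum_congr rfl (hl i))]
      simp only [← Finset.mul_sum]
    rw [Finset.sum_congr rfl hk]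
    simp only [← Finset.mul_sum]
    rw [show ∑ k : Fin m, ∑ i : Fin m, ∑ j : Fin m, (g1 m i j k x) ^ 2
      = 2 * (m : ℝ) * (Q x)⁻¹ from sum_g1_sq hm2 hQx]
  rw [h1, h2, hsin]
  have hm0 : (m : ℝ) ≠ 0 := by
    have : (5 : ℝ) ≤ (m : ℝ) := by exact_mod_cast hm
    linarith
  field_simp
  ring

end Aux

theorem stmt7 (m : ℕ) (hm : 5 ≤ m) (α : ℝ) (hα : α ∈ Set.Ioo 0 (π / 2))
    (hsin : Real.sin α ^ 2 = 1 - 2 / (m : ℝ)) :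
    (1 / 2) * ∫ x in unitBall m,
        ((∑ a : (Fin m × Fin m) ⊕ Unit, (lap (uTilde m α a) x) ^ 2)
          - (gradSq (uTilde m α) x) ^ 2)
      = (4 * ((m : ℝ) - 2) / ((m : ℝ) - 4)) * sphereVol m := by
  haveI : Nonempty (Fin m) := ⟨⟨0, by omega⟩⟩
  haveI : Nontrivial (E m) := inferInstance
  set C : ℝ := 8 * ((m : ℝ) - 2) with hC
  set f : ℝ → ℝ := fun r => if r < 1 then C * (r ^ 4)⁻¹ else 0 with hf
  -- step 1 : the set integral equals a radial integral
  have step1 : ∫ x in unitBall m,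
        ((∑ a : (Fin m × Fin m) ⊕ Unit, (lap (uTilde m α a) x) ^ 2)
          - (gradSq (uTilde m α) x) ^ 2)
      = ∫ x : E m, f ‖x‖ := by
    have h0 : ∀ᵐ x : E m ∂volume, x ≠ 0 := by
      refine ae_iff.mpr ?_
      simpa using measure_singleton (0 : E m)
    have hcongr : ∫ x in unitBall m,
        ((∑ a : (Fin m × Fin m) ⊕ Unit, (lap (uTilde m α a) x) ^ 2)
          - (gradSq (uTilde m α) x) ^ 2)
        = ∫ x in unitBall m, C * (‖x‖ ^ 4)⁻¹ := by
      refine setIntegral_congr_ae measurableSet_ball ?_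
      filter_upwards [h0] with x hx0 _
      rw [integrand_eq hm α hsin hx0, hC]
      congr 1
      rw [← normSq_eq]
      ring_nf
    rw [hcongr]
    rw [show unitBall m = Metric.ball (0 : E m) 1 from rfl,
      ← integral_indicator measurableSet_ball]
    congr 1
    funext x
    by_cases hx : x ∈ unitBall m
    · have hlt : ‖x‖ < 1 := by simpa [unitBall, mem_ball_zero_iff] using hx
      rw [Set.indicator_of_mem (show x ∈ Metric.ball (0:E m) 1 from hx), hf]
      simp [hlt]
    · have hge : ¬ ‖x‖ < 1 := by
        simp only [unitBall, Metric.mem_ball, dist_zero_right] at hx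
        exact hx
      rw [Set.indicator_of_notMem (show x ∉ Metric.ball (0:E m) 1 from hx), hf]
      simp [hge]
  rw [step1]
  -- step 2 : polar coordinates
  rw [integral_fun_norm_addHaar (volume : Measure (E m)) f]
  -- step 3 : compute the radial integral
  have hrank : Module.finrank ℝ (E m) = m := finrank_euclideanSpace_fin
  rw [hrank]
  have step3 : ∫ y in Set.Ioi (0:ℝ), y ^ (m - 1) • f y = C / ((m : ℝ) - 4) := by
    have hcongr : ∫ y in Set.Ioi (0:ℝ), y ^ (m - 1) • f y
        = ∫ y in Set.Ioi (0:ℝ), Set.indicator (Set.Iio 1) (fun y => C * y ^ (m - 5)) y := by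
      refine setIntegral_congr_fun measurableSet_Ioi (fun y hy => ?_)
      have hy0 : (0:ℝ) < y := hy
      by_cases h1 : y < 1
      · rw [Set.indicator_of_mem (by exact h1 : y ∈ Set.Iio 1)]
        rw [hf]
        simp only [h1, if_true, smul_eq_mul]
        rw [show m - 1 = (m - 5) + 4 by omega, pow_add]
        field_simp
      · rw [Set.indicator_of_notMem (by simpa using h1), hf]
        simp [h1]
    rw [hcongr, setIntegral_indicator measurableSet_Iio,
      show Set.Ioi (0:ℝ) ∩ Set.Iio 1 = Set.Ioo 0 1 from Set.Ioi_inter_Iio]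
    rw [← integral_Ioc_eq_integral_Ioo, ← intervalIntegral.integral_of_le (by norm_num : (0:ℝ) ≤ 1)]
    rw [intervalIntegral.integral_const_mul, integral_pow]
    rw [show ((m - 5 : ℕ) : ℝ) + 1 = (m:ℝ) - 4 by
      have : (5:ℝ) ≤ (m:ℝ) := by exact_mod_cast hm
      push_cast [Nat.cast_sub (by omega : 5 ≤ m)]
      ring]
    have hm4 : (m:ℝ) - 4 ≠ 0 := by
      have h5 : (5:ℝ) ≤ (m:ℝ) := by exact_mod_cast hm
      linarith
    rw [one_pow, zero_pow (by omega : m - 5 + 1 ≠ 0)]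
    field_simp
    ring
  rw [step3]
  -- step 4 : the sphere volume
  have step4 : sphereVol m = (m : ℝ) * (volume (Metric.ball (0 : E m) 1)).toReal := by
    rw [sphereVol, Measure.toSphere_apply_univ, hrank, ENNReal.toReal_mul]
    simp
  rw [nsmul_eq_mul, smul_eq_mul, step4, hC]
  have hm4 : (m : ℝ) - 4 ≠ 0 := by
    have : (5:ℝ) ≤ (m:ℝ) := by exact_mod_cast hm
    linarith
  rw [← measureReal_def]
  field_simp
  ring
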